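/- Let F : Δ(X) → ℝ be continuous, let H : Δ(X) → ℝ be the Shannon entropy H(ν) = −Σ_{x∈X} ν(x)·log ν(x), let f : ℝ → ℝ be continuous, and fix μ ∈ Δ(X). Then: (i) the supremum of E_P[F] − f(E_P[H(μ) − H(ν)]) over all P ∈ Δ²(X) with barycenter E_P[ν] = μ is attained by some P* with support of size at most 2·|X|; (ii) if moreover f is differentiable, then, writing c* = E_{P*}[H(μ) − H(ν)], such a maximizer P* also maximizes E_P[F(ν)] − f'(c*)·E_P[H(μ) − H(ν)] over all P ∈ Δ²(X) with barycenter μ. -/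

import Mathlib

open MeasureTheory Topology Filter

noncomputable section

/-- Expected value `E_P[W] = ∫ W(ν) dP(ν)` of a function `W : Δ(X) → ℝ`
under a Borel probability measure `P ∈ Δ²(X)` on the simplex `Δ(X)`. -/
def expct {X : Type*} [Fintype X] (P : ProbabilityMeasure (stdSimplex ℝ X))
    (W : stdSimplex ℝ X → ℝ) : ℝ :=
  ∫ ν, W ν ∂(P : Measure (stdSimplex ℝ X))

/-- `P ∈ Δ²(X)` has barycenter `E_P[ν] = μ`. -/
def isBary {X : Type*} [Fintype X] (P : ProbabilityMeasure (stdSimplex ℝ X))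
    (μ : stdSimplex ℝ X) : Prop :=
  ∀ x : X, expct P (fun ν => (ν : X → ℝ) x) = (μ : X → ℝ) x

/-- `P ∈ Δ²(X)` has support of size at most `m`: it is a convex combination of at
most `m` Dirac measures on `Δ(X)`. -/
def finSupp {X : Type*} [Fintype X] (P : ProbabilityMeasure (stdSimplex ℝ X)) (m : ℕ) : Prop :=
  ∃ (p : Fin m → ℝ) (ν : Fin m → stdSimplex ℝ X),
    (∀ j, 0 ≤ p j) ∧ (∑ j, p j = 1) ∧
    (P : Measure (stdSimplex ℝ X)) = ∑ j, ENNReal.ofReal (p j) • Measure.dirac (ν j)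

/-- The information possibility set
`𝒱(μ) = {(E_P[V^1], …, E_P[V^n]) : P ∈ Δ²(X), E_P[ν] = μ} ⊆ ℝ^n`. -/
def VSet {X : Type*} [Fintype X] {n : ℕ} (V : Fin n → stdSimplex ℝ X → ℝ)
    (μ : stdSimplex ℝ X) : Set (Fin n → ℝ) :=
  {v | ∃ P : ProbabilityMeasure (stdSimplex ℝ X), isBary P μ ∧ ∀ i, expct P (V i) = v i}

/-- The Shannon entropy `H(ν) = -Σ_x ν(x)·log ν(x)` on the simplex `Δ(X)`. -/
def entH {X : Type*} [Fintype X] (ν : stdSimplex ℝ X) : ℝ :=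
  -∑ x, (ν : X → ℝ) x * Real.log ((ν : X → ℝ) x)

section Aux

lemma sum_pad {M : Type*} [AddCommMonoid M] {m n : ℕ} (hmn : m ≤ n) (q : Fin n → M)
    (hq : ∀ j : Fin n, ¬((j : ℕ) < m) → q j = 0) :
    ∑ j, q j = ∑ i : Fin m, q (Fin.castLE hmn i) := by
  classical
  have h1 : ∑ j ∈ Finset.univ.map (Fin.castLEEmb hmn), q j = ∑ j, q j := by
    refine Finset.sum_subset (Finset.subset_univ _) (fun j _ hj => hq j (fun hlt => hj ?_))
    exact Finset.mem_map.mpr ⟨⟨(j : ℕ), hlt⟩, Finset.mem_univ _, by ext; simp⟩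
  rw [← h1, Finset.sum_map]
  rfl

lemma isCompact_convexHull' {E : Type*} [NormedAddCommGroup E] [NormedSpace ℝ E]
    [FiniteDimensional ℝ E] {s : Set E} (hs : IsCompact s) : IsCompact (convexHull ℝ s) := by
  rcases s.eq_empty_or_nonempty with rfl | ⟨pt, hpt⟩
  · simp
  set n := Module.finrank ℝ E + 1 with hn
  have key : convexHull ℝ s =
      (fun q : (Fin n → ℝ) × (Fin n → E) => ∑ i, q.1 i • q.2 i) ''
        ((stdSimplex ℝ (Fin n)) ×ˢ (Set.univ.pi fun _ => s)) := by
    apply Set.Subset.antisymm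
    · intro x hx
      obtain ⟨ι, hι, z, w, hzs, hai, hwpos, hw1, hzx⟩ :=
        eq_pos_convex_span_of_mem_convexHull hx
      set m := Fintype.card ι with hmdef
      have hm : m ≤ n := by
        have h1 := hai.card_le_finrank_succ (k := ℝ)
        have h2 := Submodule.finrank_le (vectorSpan ℝ (Set.range z))
        omega
      set e : Fin m ≃ ι := (Fintype.equivFin ι).symm with he
      refine ⟨(fun j => if h : (j : ℕ) < m then w (e ⟨j, h⟩) else 0,
               fun j => if h : (j : ℕ) < m then z (e ⟨j, h⟩) else pt), ⟨⟨?_, ?_⟩, ?_⟩, ?_⟩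
      · intro j
        dsimp only
        split
        · exact le_of_lt (hwpos _)
        · exact le_refl 0
      · dsimp only
        rw [sum_pad hm _ (fun j hj => dif_neg hj)]
        have : ∀ i : Fin m,
            (if h : ((Fin.castLE hm i : Fin n) : ℕ) < m then w (e ⟨(Fin.castLE hm i : ℕ), h⟩) else 0)
              = w (e i) := by
          intro i
          rw [dif_pos (show ((Fin.castLE hm i : Fin n) : ℕ) < m from i.isLt)]
          rfl
        rw [Finset.sum_congr rfl (fun i _ => this i), Equiv.sum_comp e w, hw1]
      · intro y _
        dsimp only
        split
        · exact hzs (Set.mem_range_self _)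
        · exact hpt
      · dsimp only
        rw [sum_pad hm _ (fun j hj => by rw [dif_neg hj, zero_smul])]
        have : ∀ i : Fin m,
            (if h : ((Fin.castLE hm i : Fin n) : ℕ) < m then w (e ⟨(Fin.castLE hm i : ℕ), h⟩) else 0) •
            (if h : ((Fin.castLE hm i : Fin n) : ℕ) < m then z (e ⟨(Fin.castLE hm i : ℕ), h⟩) else pt)
              = w (e i) • z (e i) := by
          intro i
          rw [dif_pos (show ((Fin.castLE hm i : Fin n) : ℕ) < m from i.isLt),
              dif_pos (show ((Fin.castLE hm i : Fin n) : ℕ) < m from i.isLt)]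
          rfl
        rw [Finset.sum_congr rfl (fun i _ => this i), Equiv.sum_comp e (fun i => w i • z i), hzx]
    · rintro x ⟨⟨w, y⟩, ⟨hw, hy⟩, rfl⟩
      have := Finset.centerMass_mem_convexHull (Finset.univ : Finset (Fin n))
        (fun i _ => hw.1 i) (by rw [hw.2]; norm_num) (fun i _ => hy i (Set.mem_univ i))
      rwa [Finset.centerMass_eq_of_sum_1 _ _ hw.2] at this
  rw [key]
  refine ((isCompact_stdSimplex _ _).prod (isCompact_univ_pi fun _ => hs)).image ?_
  exact continuous_finset_sum _ fun i _ =>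
    ((continuous_apply i).comp continuous_fst).smul ((continuous_apply i).comp continuous_snd)

lemma deriv_nonpos_aux {φ : ℝ → ℝ} {φ' : ℝ} (hφ : HasDerivAt φ φ' 0)
    (hle : ∀ t ∈ Set.Ioc (0:ℝ) 1, φ t ≤ φ 0) : φ' ≤ 0 := by
  have h := hasDerivAt_iff_tendsto_slope.mp hφ
  have h2 : Tendsto (slope φ 0) (𝓝[>] 0) (𝓝 φ') :=
    h.mono_left (nhdsWithin_mono 0 (fun x hx => by simpa using ne_of_gt hx))
  refine le_of_tendsto h2 ?_
  filter_upwards [Ioc_mem_nhdsGT_of_mem (by norm_num : (0:ℝ) ∈ Set.Ico 0 1)] with t ht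
  have h3 := hle t ht
  have h4 : slope φ 0 t = (φ t - φ 0) / (t - 0) := slope_def_field φ 0 t
  rw [h4, sub_zero]
  exact div_nonpos_of_nonpos_of_nonneg (by linarith) (le_of_lt ht.1)

lemma cont_integrable {X : Type*} [Fintype X] {E' : Type*} [NormedAddCommGroup E']
    {W : stdSimplex ℝ X → E'} (hW : Continuous W) (μ : Measure (stdSimplex ℝ X))
    [IsFiniteMeasure μ] : Integrable W μ := by
  haveI : CompactSpace (stdSimplex ℝ X) :=
    isCompact_iff_compactSpace.mp (isCompact_stdSimplex (𝕜 := ℝ) (ι := X))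
  apply hW.integrable_of_hasCompactSupport
  exact IsCompact.of_isClosed_subset isCompact_univ (isClosed_tsupport W) (Set.subset_univ _)

variable {X : Type*} [Fintype X]

lemma continuous_coord (x : X) : Continuous (fun ν : stdSimplex ℝ X => (ν : X → ℝ) x) :=
  (continuous_apply x).comp continuous_subtype_val

lemma continuous_entH : Continuous (fun ν : stdSimplex ℝ X => entH ν) := by
  have h : ∀ x : X, Continuous fun ν : stdSimplex ℝ X =>
      (ν : X → ℝ) x * Real.log ((ν : X → ℝ) x) :=
    fun x => Real.continuous_mul_log.comp (continuous_coord x)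
  exact (continuous_finset_sum _ fun x _ => h x).neg

lemma coord_decomp [DecidableEq X] (x0 : X) (ν : stdSimplex ℝ X) :
    (ν : X → ℝ) x0 = 1 - ∑ y : {x : X // x ≠ x0}, (ν : X → ℝ) y.1 := by
  have h2 : ∑ x : X, (ν : X → ℝ) x = 1 := ν.2.2
  have h3 : ∑ x ∈ Finset.univ.erase x0, (ν : X → ℝ) x
      = ∑ y : {x : X // x ≠ x0}, (ν : X → ℝ) y.1 :=
    Finset.sum_subtype _ (fun x => by simp) _
  have h4 := Finset.add_sum_erase Finset.univ (fun x => (ν : X → ℝ) x) (Finset.mem_univ x0)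
  linarith [h4, h3.symm ▸ h4]

lemma bary_x0 [DecidableEq X] (x0 : X) (P : ProbabilityMeasure (stdSimplex ℝ X)) :
    expct P (fun ν => (ν : X → ℝ) x0)
      = 1 - ∑ y : {x : X // x ≠ x0}, expct P (fun ν => (ν : X → ℝ) y.1) := by
  have h : (fun ν : stdSimplex ℝ X => (ν : X → ℝ) x0)
      = fun ν : stdSimplex ℝ X => 1 - ∑ y : {x : X // x ≠ x0}, (ν : X → ℝ) y.1 :=
    funext fun ν => coord_decomp x0 ν
  rw [expct, h, integral_sub (integrable_const 1)
      (integrable_finset_sum _ (fun y _ => cont_integrable (continuous_coord y.1) _)),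
    integral_finset_sum _ (fun y _ => cont_integrable (continuous_coord y.1) _), integral_const]
  simp [measure_univ]
  rfl

lemma finsupp_expct {n : ℕ} (p : Fin n → ℝ) (νs : Fin n → stdSimplex ℝ X)
    (hp0 : ∀ j, 0 ≤ p j) (hps : ∑ j, p j = 1) :
    ∃ R : ProbabilityMeasure (stdSimplex ℝ X),
      (R : Measure (stdSimplex ℝ X)) = ∑ j, ENNReal.ofReal (p j) • Measure.dirac (νs j) ∧
      ∀ W : stdSimplex ℝ X → ℝ, Continuous W → expct R W = ∑ j, p j * W (νs j) := by
  have hmeas : IsProbabilityMeasure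
      (∑ j, ENNReal.ofReal (p j) • (Measure.dirac (νs j) : Measure (stdSimplex ℝ X))) := by
    constructor
    rw [Measure.finset_sum_apply]
    simp only [Measure.smul_apply, measure_univ, smul_eq_mul, mul_one]
    rw [← ENNReal.ofReal_sum_of_nonneg (fun j _ => hp0 j), hps, ENNReal.ofReal_one]
  refine ⟨⟨_, hmeas⟩, rfl, ?_⟩
  intro W hW
  have hint : ∀ j ∈ Finset.univ,
      Integrable W (ENNReal.ofReal (p j) • (Measure.dirac (νs j) : Measure (stdSimplex ℝ X))) :=
    fun j _ => (cont_integrable hW _).smul_measure ENNReal.ofReal_ne_top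
  unfold expct
  show (∫ ν, W ν ∂(∑ j, ENNReal.ofReal (p j) • Measure.dirac (νs j))) = ∑ j, p j * W (νs j)
  rw [integral_finset_sum_measure hint]
  refine Finset.sum_congr rfl fun j _ => ?_
  rw [integral_smul_measure, integral_dirac' _ _ hW.stronglyMeasurable,
    ENNReal.toReal_ofReal (hp0 j), smul_eq_mul]

lemma mix_expct (P Q : ProbabilityMeasure (stdSimplex ℝ X)) {t : ℝ} (h0 : 0 ≤ t) (h1 : t ≤ 1) :
    ∃ R : ProbabilityMeasure (stdSimplex ℝ X), ∀ W : stdSimplex ℝ X → ℝ, Continuous W →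
      expct R W = (1 - t) * expct P W + t * expct Q W := by
  have hm : IsProbabilityMeasure
      (ENNReal.ofReal (1 - t) • (P : Measure (stdSimplex ℝ X))
        + ENNReal.ofReal t • (Q : Measure (stdSimplex ℝ X))) := by
    constructor
    rw [Measure.add_apply, Measure.smul_apply, Measure.smul_apply, measure_univ, measure_univ,
      smul_eq_mul, mul_one, smul_eq_mul, mul_one, ← ENNReal.ofReal_add (by linarith) h0]
    norm_num
  refine ⟨⟨_, hm⟩, fun W hW => ?_⟩
  rw [expct]
  show (∫ ν, W ν ∂(ENNReal.ofReal (1 - t) • (P : Measure (stdSimplex ℝ X))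
        + ENNReal.ofReal t • (Q : Measure (stdSimplex ℝ X))))
      = (1 - t) * expct P W + t * expct Q W
  rw [integral_add_measure ((cont_integrable hW _).smul_measure ENNReal.ofReal_ne_top)
      ((cont_integrable hW _).smul_measure ENNReal.ofReal_ne_top),
    integral_smul_measure, integral_smul_measure, ENNReal.toReal_ofReal (by linarith),
    ENNReal.toReal_ofReal h0, smul_eq_mul, smul_eq_mul]
  rfl

lemma card_ne_compl [DecidableEq X] (x0 : X) :
    Fintype.card {x : X // x ≠ x0} = Fintype.card X - 1 := by
  have h := Fintype.card_subtype_compl (fun x : X => x = x0)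
  rw [Fintype.card_subtype_eq] at h
  simpa using h

lemma finrank_E [DecidableEq X] (x0 : X) :
    Module.finrank ℝ (({x : X // x ≠ x0} → ℝ) × ℝ × ℝ)
      = Fintype.card {x : X // x ≠ x0} + 2 := by
  simp [Module.finrank_prod, Module.finrank_pi, Module.finrank_self]

end Aux

section Main

variable {X : Type*} [Fintype X] [Nonempty X] [DecidableEq X]

lemma main_case (F : stdSimplex ℝ X → ℝ) (hF : Continuous F)
    (f : ℝ → ℝ) (hf : Continuous f) (μ : stdSimplex ℝ X) (hcard : 2 ≤ Fintype.card X) :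
    ∃ Pstar : ProbabilityMeasure (stdSimplex ℝ X),
      isBary Pstar μ ∧ finSupp Pstar (2 * Fintype.card X) ∧
      (∀ Q : ProbabilityMeasure (stdSimplex ℝ X), isBary Q μ →
        expct Q F - f (entH μ - expct Q entH) ≤
          expct Pstar F - f (entH μ - expct Pstar entH)) ∧
      (Differentiable ℝ f →
        ∀ Q : ProbabilityMeasure (stdSimplex ℝ X), isBary Q μ →
          expct Q F - deriv f (entH μ - expct Pstar entH) * (entH μ - expct Q entH) ≤
          expct Pstar F - deriv f (entH μ - expct Pstar entH) * (entH μ - expct Pstar entH)) := by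
  classical
  obtain ⟨x0⟩ := ‹Nonempty X›
  set Y := {x : X // x ≠ x0} with hY
  set E := (Y → ℝ) × ℝ × ℝ with hE
  set g : stdSimplex ℝ X → E := fun ν => (fun y => (ν : X → ℝ) y.1, F ν, entH ν) with hgdef
  have hg : Continuous g := by
    refine Continuous.prodMk (continuous_pi fun y => continuous_coord y.1)
      (Continuous.prodMk hF continuous_entH)
  -- continuous linear functionals extracting components
  set L1 : Y → (E →L[ℝ] ℝ) := fun y =>
    (ContinuousLinearMap.proj y).comp (ContinuousLinearMap.fst ℝ (Y → ℝ) (ℝ × ℝ)) with hL1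
  set L2 : E →L[ℝ] ℝ :=
    (ContinuousLinearMap.fst ℝ ℝ ℝ).comp (ContinuousLinearMap.snd ℝ (Y → ℝ) (ℝ × ℝ)) with hL2
  set L3 : E →L[ℝ] ℝ :=
    (ContinuousLinearMap.snd ℝ ℝ ℝ).comp (ContinuousLinearMap.snd ℝ (Y → ℝ) (ℝ × ℝ)) with hL3
  have hgint : ∀ P : ProbabilityMeasure (stdSimplex ℝ X),
      MeasureTheory.Integrable g (P : MeasureTheory.Measure (stdSimplex ℝ X)) :=
    fun P => cont_integrable hg _
  set bvec : ProbabilityMeasure (stdSimplex ℝ X) → E :=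
    fun P => ∫ ν, g ν ∂(P : MeasureTheory.Measure (stdSimplex ℝ X)) with hbvec
  have hcompW : ∀ (P : ProbabilityMeasure (stdSimplex ℝ X)) (L : E →L[ℝ] ℝ)
      (W : stdSimplex ℝ X → ℝ), (∀ ν, L (g ν) = W ν) → expct P W = L (bvec P) := by
    intro P L W hLW
    rw [expct, show (fun ν : stdSimplex ℝ X => W ν) = fun ν => L (g ν) from
      funext fun ν => (hLW ν).symm]
    exact ContinuousLinearMap.integral_comp_comm L (hgint P)
  have hhull : IsCompact (convexHull ℝ (Set.range g)) :=
    isCompact_convexHull' (isCompact_range hg)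
  have hjen : ∀ P : ProbabilityMeasure (stdSimplex ℝ X),
      bvec P ∈ convexHull ℝ (Set.range g) := by
    intro P
    exact (convex_convexHull ℝ _).integral_mem hhull.isClosed
      (Filter.Eventually.of_forall (fun ν => subset_convexHull ℝ _ ⟨ν, rfl⟩)) (hgint P)
  -- the compact constraint set
  set K : Set E := convexHull ℝ (Set.range g) ∩ {v | v.1 = fun y : Y => (μ : X → ℝ) y.1} with hK
  have hKc : IsCompact K :=
    hhull.inter_right (isClosed_eq continuous_fst continuous_const)
  have hKne : K.Nonempty := ⟨g μ, subset_convexHull ℝ _ ⟨μ, rfl⟩, rfl⟩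
  set hobj : E → ℝ := fun v => v.2.1 - f (entH μ - v.2.2) with hobjdef
  have hobjc : Continuous hobj := by
    exact (continuous_fst.comp continuous_snd).sub
      (hf.comp (continuous_const.sub (continuous_snd.comp continuous_snd)))
  obtain ⟨b, hbK, hbmax⟩ := hKc.exists_isMaxOn hKne hobjc.continuousOn
  -- membership of bvec Q in K for barycenter-μ measures
  have hmem : ∀ Q : ProbabilityMeasure (stdSimplex ℝ X), isBary Q μ → bvec Q ∈ K := by
    intro Q hQ
    refine ⟨hjen Q, funext fun y => ?_⟩
    have := hcompW Q (L1 y) (fun ν => (ν : X → ℝ) y.1) (fun ν => rfl)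
    have h2 : (bvec Q).1 y = L1 y (bvec Q) := rfl
    rw [h2, ← this, hQ y.1]
  -- Caratheodory representation of b
  obtain ⟨ι, hι, z, w, hzs, hai, hwpos, hw1, hzx⟩ :=
    eq_pos_convex_span_of_mem_convexHull hbK.1
  set m := Fintype.card ι with hmdef
  have hcardY : Fintype.card Y = Fintype.card X - 1 := card_ne_compl x0
  have hfinE : Module.finrank ℝ E = Fintype.card Y + 2 := finrank_E x0
  have hmn : m ≤ 2 * Fintype.card X := by
    have h1 := hai.card_le_finrank_succ (k := ℝ)
    have h2 : Module.finrank ℝ (vectorSpan ℝ (Set.range z)) ≤ Module.finrank ℝ E :=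
      Submodule.finrank_le _
    have h3 : Fintype.card ι ≤ Module.finrank ℝ E + 1 :=
      le_trans h1 (Nat.add_le_add_right h2 1)
    omega
  -- choose preimages
  have hzz : ∀ i : ι, ∃ ν : stdSimplex ℝ X, g ν = z i := fun i => hzs ⟨i, rfl⟩
  choose νz hνz using hzz
  set n := 2 * Fintype.card X with hn
  set e : Fin m ≃ ι := (Fintype.equivFin ι).symm with he
  set p : Fin n → ℝ := fun j => if h : (j : ℕ) < m then w (e ⟨j, h⟩) else 0 with hp
  set νs : Fin n → stdSimplex ℝ X :=
    fun j => if h : (j : ℕ) < m then νz (e ⟨j, h⟩) else μ with hνs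
  have hp0 : ∀ j, 0 ≤ p j := by
    intro j
    rw [hp]
    dsimp only
    split
    · exact le_of_lt (hwpos _)
    · exact le_refl 0
  have hpad : ∀ W : stdSimplex ℝ X → ℝ,
      ∑ j, p j * W (νs j) = ∑ i : ι, w i * W (νz i) := by
    intro W
    rw [sum_pad hmn (fun j => p j * W (νs j))
      (fun j hj => by rw [hp]; dsimp only; rw [dif_neg hj, zero_mul])]
    have hterm : ∀ i : Fin m, p (Fin.castLE hmn i) * W (νs (Fin.castLE hmn i))
        = w (e i) * W (νz (e i)) := by
      intro i
      rw [hp, hνs]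
      dsimp only
      rw [dif_pos (show ((Fin.castLE hmn i : Fin n) : ℕ) < m from i.isLt),
          dif_pos (show ((Fin.castLE hmn i : Fin n) : ℕ) < m from i.isLt)]
      rfl
    rw [Finset.sum_congr rfl (fun i _ => hterm i),
      Equiv.sum_comp e (fun i => w i * W (νz i))]
  have hpsum : ∑ j, p j = 1 := by
    have h2 := hpad (fun _ => 1)
    simpa [hw1] using h2
  obtain ⟨Pstar, hPmeas, hPexp⟩ := finsupp_expct p νs hp0 hpsum
  -- components of b
  have hLb : ∀ L : E →L[ℝ] ℝ, ∑ i : ι, w i * L (z i) = L b := by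
    intro L
    rw [← hzx, map_sum]
    exact Finset.sum_congr rfl fun i _ => by rw [_root_.map_smul, smul_eq_mul]
  have hPW : ∀ (W : stdSimplex ℝ X → ℝ), Continuous W → ∀ (L : E →L[ℝ] ℝ),
      (∀ ν, L (g ν) = W ν) → expct Pstar W = L b := by
    intro W hW L hLg
    rw [hPexp W hW, hpad W]
    rw [Finset.sum_congr rfl (fun i _ => by rw [← hLg (νz i), hνz i])]
    exact hLb L
  have hPF : expct Pstar F = L2 b := hPW F hF L2 (fun ν => rfl)
  have hPH : expct Pstar entH = L3 b := hPW entH continuous_entH L3 (fun ν => rfl)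
  have hPy : ∀ y : Y, expct Pstar (fun ν => (ν : X → ℝ) y.1) = (μ : X → ℝ) y.1 := by
    intro y
    rw [hPW (fun ν => (ν : X → ℝ) y.1) (continuous_coord y.1) (L1 y) (fun ν => rfl)]
    have h2 : L1 y b = b.1 y := rfl
    rw [h2, hbK.2]
  have hPbary : isBary Pstar μ := by
    intro x
    by_cases hx : x = x0
    · rw [hx]
      rw [bary_x0 x0 Pstar, coord_decomp x0 μ]
      congr 1
      exact Finset.sum_congr rfl fun y _ => hPy y
    · exact hPy ⟨x, hx⟩
  -- part (i)
  have hmaxQ : ∀ Q : ProbabilityMeasure (stdSimplex ℝ X), isBary Q μ →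
      expct Q F - f (entH μ - expct Q entH) ≤
        expct Pstar F - f (entH μ - expct Pstar entH) := by
    intro Q hQ
    have h1 := hbmax (hmem Q hQ)
    have hQF : expct Q F = L2 (bvec Q) := hcompW Q L2 F (fun ν => rfl)
    have hQH : expct Q entH = L3 (bvec Q) := hcompW Q L3 entH (fun ν => rfl)
    have h2 : hobj (bvec Q) = expct Q F - f (entH μ - expct Q entH) := by
      rw [hobjdef, hQF, hQH]; rfl
    have h3 : hobj b = expct Pstar F - f (entH μ - expct Pstar entH) := by
      rw [hobjdef, hPF, hPH]; rfl
    rw [← h2, ← h3]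
    exact h1
  refine ⟨Pstar, hPbary, ⟨p, νs, hp0, hpsum, hPmeas⟩, hmaxQ, ?_⟩
  -- part (ii)
  intro hdiff Q hQ
  set A := expct Pstar F with hA
  set B := expct Q F with hB
  set c := entH μ - expct Pstar entH with hc
  set d := entH μ - expct Q entH with hd
  have key : ∀ t : ℝ, 0 < t → t ≤ 1 → A + t * (B - A) - f (c + t * (d - c)) ≤ A - f c := by
    intro t ht0 ht1
    obtain ⟨R, hR⟩ := mix_expct Pstar Q (le_of_lt ht0) ht1
    have hRB : isBary R μ := by
      intro x
      rw [hR _ (continuous_coord x), hPbary x, hQ x]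
      ring
    have h1 := hmaxQ R hRB
    rw [hR F hF, hR entH continuous_entH] at h1
    have e1 : (1 - t) * expct Pstar F + t * expct Q F = A + t * (B - A) := by
      rw [hA, hB]; ring
    have e2 : entH μ - ((1 - t) * expct Pstar entH + t * expct Q entH) = c + t * (d - c) := by
      rw [hc, hd]; ring
    rw [e1, e2] at h1
    exact h1
  have hinner : HasDerivAt (fun t : ℝ => c + t * (d - c)) (d - c) 0 := by
    simpa using ((hasDerivAt_id (0 : ℝ)).mul_const (d - c)).const_add c
  have hf0 : HasDerivAt f (deriv f c) ((fun t : ℝ => c + t * (d - c)) 0) := by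
    simpa using (hdiff c).hasDerivAt
  have houter := hf0.comp 0 hinner
  have haff : HasDerivAt (fun t : ℝ => A + t * (B - A)) (B - A) 0 := by
    simpa using ((hasDerivAt_id (0 : ℝ)).mul_const (B - A)).const_add A
  have hphi : HasDerivAt (fun t : ℝ => A + t * (B - A) - f (c + t * (d - c)))
      ((B - A) - deriv f c * (d - c)) 0 := haff.sub houter
  have hder : (B - A) - deriv f c * (d - c) ≤ 0 := by
    refine deriv_nonpos_aux hphi ?_
    intro t ht
    have h0 : A + (0:ℝ) * (B - A) - f (c + (0:ℝ) * (d - c)) = A - f c := by norm_num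
    have := key t ht.1 ht.2
    simpa [h0] using this
  have hexp : deriv f c * (d - c) = deriv f c * d - deriv f c * c := by ring
  linarith
end Main


lemma small_case {X : Type*} [Fintype X] [Nonempty X]
    (hcard : Fintype.card X = 1) (F : stdSimplex ℝ X → ℝ)
    (f : ℝ → ℝ) (μ : stdSimplex ℝ X) :
    ∃ Pstar : ProbabilityMeasure (stdSimplex ℝ X),
      isBary Pstar μ ∧ finSupp Pstar (2 * Fintype.card X) ∧
      (∀ Q : ProbabilityMeasure (stdSimplex ℝ X), isBary Q μ →
        expct Q F - f (entH μ - expct Q entH) ≤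
          expct Pstar F - f (entH μ - expct Pstar entH)) ∧
      (Differentiable ℝ f →
        ∀ Q : ProbabilityMeasure (stdSimplex ℝ X), isBary Q μ →
          expct Q F - deriv f (entH μ - expct Pstar entH) * (entH μ - expct Q entH) ≤
          expct Pstar F - deriv f (entH μ - expct Pstar entH) * (entH μ - expct Pstar entH)) := by
  classical
  obtain ⟨x0, hx0⟩ := Fintype.card_eq_one_iff.mp hcard
  haveI : Subsingleton (stdSimplex ℝ X) := by
    constructor
    intro a b
    apply Subtype.ext
    funext x
    have ha : ∑ x : X, (a : X → ℝ) x = 1 := a.2.2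
    have hb : ∑ x : X, (b : X → ℝ) x = 1 := b.2.2
    have hsa : ∑ x : X, (a : X → ℝ) x = (a : X → ℝ) x0 :=
      Finset.sum_eq_single x0 (fun c _ hc => absurd (hx0 c) hc)
        (fun h => absurd (Finset.mem_univ _) h)
    have hsb : ∑ x : X, (b : X → ℝ) x = (b : X → ℝ) x0 :=
      Finset.sum_eq_single x0 (fun c _ hc => absurd (hx0 c) hc)
        (fun h => absurd (Finset.mem_univ _) h)
    rw [hx0 x]
    change (a : X → ℝ) x0 = (b : X → ℝ) x0
    linarith
  have hconst : ∀ (Q : ProbabilityMeasure (stdSimplex ℝ X)) (W : stdSimplex ℝ X → ℝ),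
      expct Q W = W μ := by
    intro Q W
    have h : W = fun _ => W μ := funext fun ν => congrArg W (Subsingleton.elim ν μ)
    rw [expct, h, MeasureTheory.integral_const]
    simp [measure_univ]
  set p : Fin (2 * Fintype.card X) → ℝ := fun j => if (j : ℕ) = 0 then 1 else 0 with hp
  have hp0 : ∀ j, 0 ≤ p j := by
    intro j; rw [hp]; dsimp only; split <;> norm_num
  have hn2 : 2 * Fintype.card X = 2 := by omega
  have hz : (⟨0, by omega⟩ : Fin (2 * Fintype.card X)) = ⟨0, by omega⟩ := rfl
  have hpsum : ∑ j, p j = 1 := by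
    rw [hp]
    rw [Finset.sum_eq_single (⟨0, by omega⟩ : Fin (2 * Fintype.card X))]
    · simp
    · intro c _ hc
      have : (c : ℕ) ≠ 0 := by
        intro h; exact hc (Fin.ext h)
      simp [this]
    · intro h; exact absurd (Finset.mem_univ _) h
  obtain ⟨Pstar, hPmeas, hPexp⟩ := finsupp_expct p (fun _ => μ) hp0 hpsum
  have hPconst : ∀ W, expct Pstar W = W μ := fun W => hconst Pstar W
  refine ⟨Pstar, ?_, ⟨p, fun _ => μ, hp0, hpsum, hPmeas⟩, ?_, ?_⟩
  · intro x
    rw [hPconst]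
  · intro Q hQ
    rw [hPconst F, hPconst entH, hconst Q F, hconst Q entH]
  · intro _ Q hQ
    rw [hPconst F, hPconst entH, hconst Q F, hconst Q entH]


/-- costly information acquisition. (i) The supremum of
`E_P[F] − f(E_P[H(μ) − H(ν)])` over `P ∈ Δ²(X)` with barycenter `μ` is attained by some
`P*` with support of size at most `2·|X|`; (ii) if `f` is differentiable then, with
`c* = E_{P*}[H(μ) − H(ν)]`, such a `P*` also maximizes
`E_P[F(ν)] − f'(c*)·E_P[H(μ) − H(ν)]` over all barycenter-`μ` measures. -/
theorem statement_17 {X : Type*} [Fintype X] [Nonempty X]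
    (F : stdSimplex ℝ X → ℝ) (hF : Continuous F)
    (f : ℝ → ℝ) (hf : Continuous f) (μ : stdSimplex ℝ X) :
    ∃ Pstar : ProbabilityMeasure (stdSimplex ℝ X),
      isBary Pstar μ ∧ finSupp Pstar (2 * Fintype.card X) ∧
      (∀ Q : ProbabilityMeasure (stdSimplex ℝ X), isBary Q μ →
        expct Q F - f (entH μ - expct Q entH) ≤
          expct Pstar F - f (entH μ - expct Pstar entH)) ∧
      (Differentiable ℝ f →
        ∀ Q : ProbabilityMeasure (stdSimplex ℝ X), isBary Q μ →
          expct Q F - deriv f (entH μ - expct Pstar entH) * (entH μ - expct Q entH) ≤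
          expct Pstar F - deriv f (entH μ - expct Pstar entH) * (entH μ - expct Pstar entH)) := by
  classical
  rcases le_or_gt 2 (Fintype.card X) with hcard | hcard
  · exact main_case F hF f hf μ hcard
  · have h1 : Fintype.card X = 1 := by
      have := Fintype.card_pos_iff.mpr ‹Nonempty X›
      omega
    exact small_case h1 F f μ
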